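/- Let G be a k-degenerate graph with maximum degree Δ(G) and let H be an l-degenerate graph. Then AT(G +_T H) ≤ max{2Δ(G), k + l} + 1. -/

import Mathlib

open scoped Classical

/-- The outdegree of a vertex `v` in a finite set of arcs `A`. -/
noncomputable def arcOutDeg {V : Type*} (A : Finset (V × V)) (v : V) : ℕ :=
  (A.filter fun a => a.1 = v).card

/-- The indegree of a vertex `v` in a finite set of arcs `A`. -/
noncomputable def arcInDeg {V : Type*} (A : Finset (V × V)) (v : V) : ℕ :=
  (A.filter fun a => a.2 = v).card

/-- `A` is an orientation of the simple graph `G`: every arc of `A` joins adjacent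
vertices, and every edge of `G` receives exactly one of its two possible directions. -/
def IsOrientation {V : Type*} (G : SimpleGraph V) (A : Finset (V × V)) : Prop :=
  (∀ a ∈ A, G.Adj a.1 a.2) ∧ ∀ u v : V, G.Adj u v → ((u, v) ∈ A ↔ (v, u) ∉ A)

/-- A set of arcs is Eulerian if at every vertex the indegree equals the outdegree. -/
def IsEulerianSub {V : Type*} (B : Finset (V × V)) : Prop :=
  ∀ v : V, arcInDeg B v = arcOutDeg B v

/-- An orientation (given by its arc set `A`) is an Alon–Tarsi orientation if the number
of its even Eulerian sub-digraphs differs from the number of its odd Eulerian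
sub-digraphs. -/
def IsATOrientation {V : Type*} (A : Finset (V × V)) : Prop :=
  (A.powerset.filter fun B => IsEulerianSub B ∧ Even B.card).card ≠
    (A.powerset.filter fun B => IsEulerianSub B ∧ ¬ Even B.card).card

/-- The Alon–Tarsi number of `G`: the least `k` such that `G` has an Alon–Tarsi
orientation with maximum outdegree at most `k - 1` (i.e. `< k`). -/
noncomputable def alonTarsiNumber {V : Type*} (G : SimpleGraph V) : ℕ :=
  sInf {k : ℕ | ∃ A : Finset (V × V),
    IsOrientation G A ∧ IsATOrientation A ∧ ∀ v : V, arcOutDeg A v < k}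

/-- A graph is `k`-degenerate if every nonempty (induced) subgraph has a vertex of
degree at most `k`. -/
def Degenerate {V : Type*} (k : ℕ) (G : SimpleGraph V) : Prop :=
  ∀ s : Finset V, s.Nonempty → ∃ v ∈ s, (s.filter fun u => G.Adj v u).card ≤ k

/-- The subdivision graph `S(G)`: each edge `uv` of `G` is replaced by a path `u-e-v`
through the new vertex `e` corresponding to `uv`. -/
def subdivisionGraph {V : Type*} (G : SimpleGraph V) : SimpleGraph (V ⊕ ↥G.edgeSet) :=
  SimpleGraph.fromRel fun a b =>
    match a, b with
    | Sum.inl u, Sum.inr e => u ∈ (e : Sym2 V)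
    | _, _ => False

/-- The graph `R(G)`: `G` together with, for each edge `uv`, a new vertex joined to
`u` and `v`. -/
def rGraph {V : Type*} (G : SimpleGraph V) : SimpleGraph (V ⊕ ↥G.edgeSet) :=
  SimpleGraph.fromRel fun a b =>
    match a, b with
    | Sum.inl u, Sum.inl v => G.Adj u v
    | Sum.inl u, Sum.inr e => u ∈ (e : Sym2 V)
    | _, _ => False

/-- The graph `Q(G)`: new vertices joined to the endpoints of their edges, and two new
vertices joined iff the corresponding edges of `G` share an endpoint; original
vertices are pairwise nonadjacent. -/
def qGraph {V : Type*} (G : SimpleGraph V) : SimpleGraph (V ⊕ ↥G.edgeSet) :=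
  SimpleGraph.fromRel fun a b =>
    match a, b with
    | Sum.inl u, Sum.inr e => u ∈ (e : Sym2 V)
    | Sum.inr e, Sum.inr f => e ≠ f ∧ ∃ u : V, u ∈ (e : Sym2 V) ∧ u ∈ (f : Sym2 V)
    | _, _ => False

/-- The total graph `T(G)`. -/
def tGraph {V : Type*} (G : SimpleGraph V) : SimpleGraph (V ⊕ ↥G.edgeSet) :=
  SimpleGraph.fromRel fun a b =>
    match a, b with
    | Sum.inl u, Sum.inl v => G.Adj u v
    | Sum.inl u, Sum.inr e => u ∈ (e : Sym2 V)
    | Sum.inr e, Sum.inr f => e ≠ f ∧ ∃ u : V, u ∈ (e : Sym2 V) ∧ u ∈ (f : Sym2 V)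
    | _, _ => False

/-- The `F`-sum construction: given a graph `K` on `V ⊕ E` (playing the role of `F(G)`,
whose "original" vertices are those of the form `Sum.inl u`) and a graph `H` on `W`,
two vertices `(u₁, u₂)` and `(v₁, v₂)` are adjacent iff either `u₁ = v₁` is an original
vertex and `u₂v₂ ∈ E(H)`, or `u₂ = v₂` and `u₁v₁ ∈ E(K)`. -/
def fSum {V E W : Type*} (K : SimpleGraph (V ⊕ E)) (H : SimpleGraph W) :
    SimpleGraph ((V ⊕ E) × W) :=
  SimpleGraph.fromRel fun a b =>
    (a.1 = b.1 ∧ (∃ u : V, a.1 = Sum.inl u) ∧ H.Adj a.2 b.2) ∨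
      (a.2 = b.2 ∧ K.Adj a.1 b.1)

/-- The `S`-sum `G +_S H`. -/
def sSum {V W : Type*} (G : SimpleGraph V) (H : SimpleGraph W) :
    SimpleGraph ((V ⊕ ↥G.edgeSet) × W) :=
  fSum (subdivisionGraph G) H

/-- The `R`-sum `G +_R H`. -/
def rSum {V W : Type*} (G : SimpleGraph V) (H : SimpleGraph W) :
    SimpleGraph ((V ⊕ ↥G.edgeSet) × W) :=
  fSum (rGraph G) H

/-- The `Q`-sum `G +_Q H`. -/
def qSum {V W : Type*} (G : SimpleGraph V) (H : SimpleGraph W) :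
    SimpleGraph ((V ⊕ ↥G.edgeSet) × W) :=
  fSum (qGraph G) H

/-- The `T`-sum `G +_T H`. -/
def tSum {V W : Type*} (G : SimpleGraph V) (H : SimpleGraph W) :
    SimpleGraph ((V ⊕ ↥G.edgeSet) × W) :=
  fSum (tGraph G) H

/-- The star graph `S_n = K_{1,n}`. -/
def starGraph (n : ℕ) : SimpleGraph (Fin 1 ⊕ Fin n) :=
  completeBipartiteGraph (Fin 1) (Fin n)

lemma exists_rank {U : Type*} {d : ℕ} {K : SimpleGraph U} (h : Degenerate d K)
    (s : Finset U) : ∃ r : U → ℕ, Set.InjOn r s ∧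
      ∀ v ∈ s, (s.filter fun u => K.Adj v u ∧ r u < r v).card ≤ d := by
  induction s using Finset.strongInduction with
  | _ s ih =>
    rcases s.eq_empty_or_nonempty with rfl | hs
    · exact ⟨fun _ => 0, by simp, by simp⟩
    obtain ⟨v, hv, hdeg⟩ := h s hs
    obtain ⟨r, hr, hrd⟩ := ih (s.erase v) (Finset.erase_ssubset hv)
    set N := (s.erase v).sup r + 1 with hN
    have hlt : ∀ u ∈ s.erase v, r u < N := fun u hu =>
      Nat.lt_succ_of_le (Finset.le_sup hu)
    refine ⟨fun u => if u = v then N else r u, ?_, ?_⟩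
    · intro x hx y hy hxy
      simp only at hxy
      by_cases hxv : x = v <;> by_cases hyv : y = v
      · rw [hxv, hyv]
      · rw [if_pos hxv, if_neg hyv] at hxy
        exact absurd hxy.symm (Nat.ne_of_lt (hlt y (Finset.mem_erase.2 ⟨hyv, hy⟩)))
      · rw [if_neg hxv, if_pos hyv] at hxy
        exact absurd hxy (Nat.ne_of_lt (hlt x (Finset.mem_erase.2 ⟨hxv, hx⟩)))
      · rw [if_neg hxv, if_neg hyv] at hxy
        exact hr (Finset.mem_erase.2 ⟨hxv, hx⟩) (Finset.mem_erase.2 ⟨hyv, hy⟩) hxy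
    · intro u hu
      by_cases huv : u = v
      · subst huv
        refine le_trans (Finset.card_le_card ?_) hdeg
        intro w hw
        simp only [Finset.mem_filter] at hw ⊢
        exact ⟨hw.1, hw.2.1⟩
      · refine le_trans (Finset.card_le_card ?_) (hrd u (Finset.mem_erase.2 ⟨huv, hu⟩))
        intro w hw
        simp only [Finset.mem_filter, Finset.mem_erase] at hw ⊢
        obtain ⟨hws, hadj, hlt'⟩ := hw
        rw [if_neg huv] at hlt'
        have hwv : w ≠ v := by
          intro hwv; subst hwv
          rw [if_pos rfl] at hlt'
          exact absurd hlt' (not_lt.2 (le_of_lt (hlt u (Finset.mem_erase.2 ⟨huv, hu⟩))))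
        rw [if_neg hwv] at hlt'
        exact ⟨⟨hwv, hws⟩, hadj, hlt'⟩

lemma AT_le_of_degenerate {U : Type*} [Fintype U] {d : ℕ} {K : SimpleGraph U}
    (h : Degenerate d K) : alonTarsiNumber K ≤ d + 1 := by
  obtain ⟨r, hr, hrd⟩ := exists_rank h Finset.univ
  have hrinj : Function.Injective r := fun x y hxy =>
    hr (Finset.mem_coe.2 (Finset.mem_univ x)) (Finset.mem_coe.2 (Finset.mem_univ y)) hxy
  set A : Finset (U × U) := Finset.univ.filter fun a => K.Adj a.1 a.2 ∧ r a.2 < r a.1 with hA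
  have hmemA : ∀ a : U × U, a ∈ A ↔ K.Adj a.1 a.2 ∧ r a.2 < r a.1 := by
    intro a; simp [hA]
  -- orientation
  have hOr : IsOrientation K A := by
    constructor
    · intro a ha; exact ((hmemA a).1 ha).1
    · intro u v huv
      rw [hmemA, hmemA]
      simp only
      have hne : r u ≠ r v := fun he => huv.ne (hrinj he)
      constructor
      · rintro ⟨-, hlt⟩ ⟨-, hlt'⟩; omega
      · intro hn
        refine ⟨huv, ?_⟩
        by_contra hlt
        exact hn ⟨huv.symm, by omega⟩
  -- only the empty Eulerian sub
  have hEul : ∀ B ∈ A.powerset, IsEulerianSub B → B = ∅ := by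
    intro B hB hEB
    by_contra hne
    have hBne : B.Nonempty := Finset.nonempty_iff_ne_empty.2 hne
    obtain ⟨a, haB, hsup⟩ := Finset.exists_mem_eq_sup B hBne fun a => r a.1
    have hout : 0 < arcOutDeg B a.1 := by
      rw [arcOutDeg, Finset.card_pos]
      exact ⟨a, Finset.mem_filter.2 ⟨haB, rfl⟩⟩
    have hin : 0 < arcInDeg B a.1 := by rw [hEB a.1]; exact hout
    rw [arcInDeg, Finset.card_pos] at hin
    obtain ⟨b, hbB⟩ := hin
    rw [Finset.mem_filter] at hbB
    have hbA := Finset.mem_powerset.1 hB hbB.1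
    rw [hmemA] at hbA
    have h1 : r b.1 ≤ B.sup fun a => r a.1 := Finset.le_sup (f := fun a => r a.1) hbB.1
    rw [hsup] at h1
    have h2 : r a.1 < r b.1 := hbB.2 ▸ hbA.2
    omega
  have hAT : IsATOrientation A := by
    have he : (A.powerset.filter fun B => IsEulerianSub B ∧ Even B.card) = {∅} := by
      ext B
      simp only [Finset.mem_filter, Finset.mem_singleton]
      constructor
      · rintro ⟨hB, hE, -⟩; exact hEul B hB hE
      · rintro rfl
        refine ⟨Finset.empty_mem_powerset A, fun v => ?_, by simp⟩
        simp [arcInDeg, arcOutDeg]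
    have ho : (A.powerset.filter fun B => IsEulerianSub B ∧ ¬ Even B.card) = ∅ := by
      ext B
      simp only [Finset.mem_filter, Finset.notMem_empty, iff_false, not_and]
      intro hB hE
      rw [hEul B hB hE]
      simp
    rw [IsATOrientation, he, ho]
    simp
  have hout : ∀ v : U, arcOutDeg A v < d + 1 := by
    intro v
    refine Nat.lt_succ_of_le (le_trans ?_ (hrd v (Finset.mem_univ v)))
    apply Finset.card_le_card_of_injOn Prod.snd
    · intro a ha
      simp only [Finset.mem_coe, Finset.mem_filter] at ha ⊢
      obtain ⟨haA, hfst⟩ := ha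
      rw [hmemA] at haA
      subst hfst
      exact ⟨Finset.mem_univ _, haA.1, haA.2⟩
    · intro a ha b hb hab
      simp only [Finset.coe_filter, Set.mem_setOf_eq] at ha hb
      exact Prod.ext (ha.2.trans hb.2.symm) hab
  exact Nat.sInf_le ⟨A, hOr, hAT, hout⟩
section Adj
variable {V W : Type*} (G : SimpleGraph V) (H : SimpleGraph W)

lemma tGraph_adj_inl_inr (u : V) (e : ↥G.edgeSet) :
    (tGraph G).Adj (Sum.inl u) (Sum.inr e) ↔ u ∈ (e : Sym2 V) := by
  simp [tGraph, SimpleGraph.fromRel_adj]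

lemma tGraph_adj_inl_inl (u v : V) :
    (tGraph G).Adj (Sum.inl u) (Sum.inl v) ↔ G.Adj u v := by
  constructor
  · rintro h
    rw [tGraph, SimpleGraph.fromRel_adj] at h
    rcases h.2 with h' | h'
    · exact h'
    · exact h'.symm
  · intro h
    rw [tGraph, SimpleGraph.fromRel_adj]
    exact ⟨by simp [h.ne], Or.inl h⟩

lemma tGraph_adj_inr_inr (e f : ↥G.edgeSet) :
    (tGraph G).Adj (Sum.inr e) (Sum.inr f) ↔
      e ≠ f ∧ ∃ u : V, u ∈ (e : Sym2 V) ∧ u ∈ (f : Sym2 V) := by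
  rw [tGraph, SimpleGraph.fromRel_adj]
  constructor
  · rintro ⟨hne, h | h⟩
    · exact h
    · exact ⟨h.1.symm, h.2.imp fun u hu => hu.symm⟩
  · rintro ⟨hne, hu⟩
    exact ⟨by simp [hne], Or.inl ⟨hne, hu⟩⟩

lemma tGraph_adj_inr (e : ↥G.edgeSet) (x : V ⊕ ↥G.edgeSet) :
    (tGraph G).Adj (Sum.inr e) x ↔
      (∃ u : V, x = Sum.inl u ∧ u ∈ (e : Sym2 V)) ∨
      (∃ f : ↥G.edgeSet, x = Sum.inr f ∧ f ≠ e ∧ ∃ u : V, u ∈ (e : Sym2 V) ∧ u ∈ (f : Sym2 V)) := by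
  rcases x with u | f
  · rw [(tGraph G).adj_comm, tGraph_adj_inl_inr]
    simp
  · rw [tGraph_adj_inr_inr]
    simp [ne_comm]

lemma tGraph_adj_inl (v : V) (x : V ⊕ ↥G.edgeSet) (h : (tGraph G).Adj (Sum.inl v) x) :
    (∃ u : V, x = Sum.inl u ∧ G.Adj v u) ∨ (∃ e : ↥G.edgeSet, x = Sum.inr e) := by
  rcases x with u | e
  · exact Or.inl ⟨u, rfl, (tGraph_adj_inl_inl G v u).1 h⟩
  · exact Or.inr ⟨e, rfl⟩

lemma tSum_adj_inr (e : ↥G.edgeSet) (w : W) (q : (V ⊕ ↥G.edgeSet) × W)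
    (h : (tSum G H).Adj (Sum.inr e, w) q) :
    q.2 = w ∧ (tGraph G).Adj (Sum.inr e) q.1 := by
  rw [tSum, fSum, SimpleGraph.fromRel_adj] at h
  obtain ⟨hne, h | h⟩ := h
  · rcases h with ⟨-, ⟨u, hu⟩, -⟩ | ⟨h1, h2⟩
    · exact absurd hu (by simp)
    · exact ⟨h1.symm, h2⟩
  · rcases h with ⟨h1, ⟨u, hu⟩, -⟩ | ⟨h1, h2⟩
    · rw [h1] at hu; exact absurd hu (by simp)
    · exact ⟨h1, h2.symm⟩

lemma tSum_adj_inl (v : V) (w : W) (q : (V ⊕ ↥G.edgeSet) × W)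
    (h : (tSum G H).Adj (Sum.inl v, w) q) :
    (q.1 = Sum.inl v ∧ H.Adj w q.2) ∨ (q.2 = w ∧ (tGraph G).Adj (Sum.inl v) q.1) := by
  rw [tSum, fSum, SimpleGraph.fromRel_adj] at h
  obtain ⟨hne, h | h⟩ := h
  · rcases h with ⟨h1, -, h2⟩ | ⟨h1, h2⟩
    · exact Or.inl ⟨h1.symm, h2⟩
    · exact Or.inr ⟨h1.symm, h2⟩
  · rcases h with ⟨h1, -, h2⟩ | ⟨h1, h2⟩
    · exact Or.inl ⟨h1, h2.symm⟩
    · exact Or.inr ⟨h1, h2.symm⟩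
end Adj
lemma tGraph_inr_degree_le {V : Type*} [Fintype V] (G : SimpleGraph V) (e : ↥G.edgeSet) :
    (Finset.univ.filter fun x : V ⊕ ↥G.edgeSet => (tGraph G).Adj (Sum.inr e) x).card
      ≤ 2 * G.maxDegree := by
  obtain ⟨a, b, hab⟩ : ∃ a b : V, (e : Sym2 V) = s(a, b) := by
    obtain ⟨⟨a, b⟩, hab⟩ := Quot.exists_rep (e : Sym2 V)
    exact ⟨a, b, hab.symm⟩
  have hGab : G.Adj a b := by
    have h2 := e.2
    rw [hab, SimpleGraph.mem_edgeSet] at h2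
    exact h2
  have hne : a ≠ b := hGab.ne
  classical
  set T2 : Finset (V × V) :=
    ((G.neighborFinset a).image fun x => (a, x)) ∪
      ((G.neighborFinset b).image fun x => (b, x)) with hT2
  have hT2card : T2.card ≤ 2 * G.maxDegree := by
    refine le_trans (Finset.card_union_le _ _) ?_
    have h1 := Finset.card_image_le (s := G.neighborFinset a) (f := fun x => (a, x))
    have h2 := Finset.card_image_le (s := G.neighborFinset b) (f := fun x => (b, x))
    rw [SimpleGraph.card_neighborFinset_eq_degree] at h1 h2
    have := G.degree_le_maxDegree a
    have := G.degree_le_maxDegree b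
    omega
  set φ : V ⊕ ↥G.edgeSet → V × V := fun x =>
    match x with
    | Sum.inl u => if u = a then (a, b) else (b, a)
    | Sum.inr f =>
        if h : a ∈ (f : Sym2 V) then (a, Sym2.Mem.other h)
        else if h' : b ∈ (f : Sym2 V) then (b, Sym2.Mem.other h') else (a, a)
    with hφ
  have hnbr : ∀ u : V, ∀ f : ↥G.edgeSet, ∀ h : u ∈ (f : Sym2 V),
      G.Adj u (Sym2.Mem.other h) := by
    intro u f h
    rw [← SimpleGraph.mem_edgeSet, Sym2.other_spec h]
    exact f.2
  have hother : ∀ u : V, ∀ f : ↥G.edgeSet, ∀ h : u ∈ (f : Sym2 V),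
      (f : Sym2 V) = s(u, Sym2.Mem.other h) := fun u f h => (Sym2.other_spec h).symm
  have hbmem : ∀ f : ↥G.edgeSet, (tGraph G).Adj (Sum.inr e) (Sum.inr f) →
      a ∉ (f : Sym2 V) → b ∈ (f : Sym2 V) := by
    intro f hadj ha
    rw [tGraph_adj_inr_inr] at hadj
    obtain ⟨-, u, hue, huf⟩ := hadj
    rw [hab, Sym2.mem_iff] at hue
    rcases hue with rfl | rfl
    · exact absurd huf ha
    · exact huf
  -- value of φ on inl neighbors
  have hinlval : ∀ u : V, (tGraph G).Adj (Sum.inr e) (Sum.inl u) →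
      (u = a ∧ φ (Sum.inl u) = (a, b)) ∨ (u = b ∧ φ (Sum.inl u) = (b, a)) := by
    intro u hadj
    rw [(tGraph G).adj_comm, tGraph_adj_inl_inr, hab, Sym2.mem_iff] at hadj
    rcases hadj with h | h
    · exact Or.inl ⟨h, by simp only [hφ]; rw [if_pos h]⟩
    · refine Or.inr ⟨h, ?_⟩
      simp only [hφ]
      rw [if_neg (by rw [h]; exact Ne.symm hne)]
  -- φ on inr neighbors avoids (a,b) and (b,a)
  have hkey : ∀ f : ↥G.edgeSet, (tGraph G).Adj (Sum.inr e) (Sum.inr f) →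
      φ (Sum.inr f) ≠ (a, b) ∧ φ (Sum.inr f) ≠ (b, a) := by
    intro f hadj
    have hfe : f ≠ e := (((tGraph_adj_inr_inr G e f).1 hadj).1).symm
    by_cases ha : a ∈ (f : Sym2 V)
    · have hval : φ (Sum.inr f) = (a, Sym2.Mem.other ha) := by
        simp only [hφ]; rw [dif_pos ha]
      rw [hval]
      constructor
      · intro hcon
        have h1 : Sym2.Mem.other ha = b := congrArg Prod.snd hcon
        refine hfe (Subtype.ext ?_)
        rw [hother a f ha, h1, hab]
      · intro hcon
        exact hne (congrArg Prod.fst hcon)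
    · have hb := hbmem f hadj ha
      have hval : φ (Sum.inr f) = (b, Sym2.Mem.other hb) := by
        simp only [hφ]; rw [dif_neg ha, dif_pos hb]
      rw [hval]
      constructor
      · intro hcon
        exact hne (congrArg Prod.fst hcon).symm
      · intro hcon
        have h1 : Sym2.Mem.other hb = a := congrArg Prod.snd hcon
        refine hfe (Subtype.ext ?_)
        rw [hother b f hb, h1, hab, Sym2.eq_swap]
  -- φ injective on inr neighbors
  have hkey2 : ∀ f f' : ↥G.edgeSet, (tGraph G).Adj (Sum.inr e) (Sum.inr f) →
      (tGraph G).Adj (Sum.inr e) (Sum.inr f') → φ (Sum.inr f) = φ (Sum.inr f') → f = f' := by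
    intro f f' hadj hadj' hxy
    by_cases ha : a ∈ (f : Sym2 V) <;> by_cases ha' : a ∈ (f' : Sym2 V)
    · have hval : φ (Sum.inr f) = (a, Sym2.Mem.other ha) := by
        simp only [hφ]; rw [dif_pos ha]
      have hval' : φ (Sum.inr f') = (a, Sym2.Mem.other ha') := by
        simp only [hφ]; rw [dif_pos ha']
      rw [hval, hval'] at hxy
      have h2 : Sym2.Mem.other ha = Sym2.Mem.other ha' := congrArg Prod.snd hxy
      refine Subtype.ext ?_
      rw [hother a f ha, hother a f' ha', h2]
    · have hb' := hbmem f' hadj' ha'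
      have hval : φ (Sum.inr f) = (a, Sym2.Mem.other ha) := by
        simp only [hφ]; rw [dif_pos ha]
      have hval' : φ (Sum.inr f') = (b, Sym2.Mem.other hb') := by
        simp only [hφ]; rw [dif_neg ha', dif_pos hb']
      rw [hval, hval'] at hxy
      exact absurd (congrArg Prod.fst hxy) hne
    · have hb := hbmem f hadj ha
      have hval : φ (Sum.inr f) = (b, Sym2.Mem.other hb) := by
        simp only [hφ]; rw [dif_neg ha, dif_pos hb]
      have hval' : φ (Sum.inr f') = (a, Sym2.Mem.other ha') := by
        simp only [hφ]; rw [dif_pos ha']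
      rw [hval, hval'] at hxy
      exact absurd (congrArg Prod.fst hxy).symm hne
    · have hb := hbmem f hadj ha
      have hb' := hbmem f' hadj' ha'
      have hval : φ (Sum.inr f) = (b, Sym2.Mem.other hb) := by
        simp only [hφ]; rw [dif_neg ha, dif_pos hb]
      have hval' : φ (Sum.inr f') = (b, Sym2.Mem.other hb') := by
        simp only [hφ]; rw [dif_neg ha', dif_pos hb']
      rw [hval, hval'] at hxy
      have h2 : Sym2.Mem.other hb = Sym2.Mem.other hb' := congrArg Prod.snd hxy
      refine Subtype.ext ?_
      rw [hother b f hb, hother b f' hb', h2]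
  refine le_trans (Finset.card_le_card_of_injOn φ ?_ ?_) hT2card
  · intro x hx
    rw [Finset.mem_coe, Finset.mem_filter] at hx
    have hadj := hx.2
    rcases x with u | f
    · rcases hinlval u hadj with ⟨-, hval⟩ | ⟨-, hval⟩
      · rw [hval, hT2]
        exact Finset.mem_union_left _
          (Finset.mem_image.2 ⟨b, (G.mem_neighborFinset a b).2 hGab, rfl⟩)
      · rw [hval, hT2]
        exact Finset.mem_union_right _
          (Finset.mem_image.2 ⟨a, (G.mem_neighborFinset b a).2 hGab.symm, rfl⟩)
    · by_cases ha : a ∈ (f : Sym2 V)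
      · have hval : φ (Sum.inr f) = (a, Sym2.Mem.other ha) := by
          simp only [hφ]; rw [dif_pos ha]
        rw [hval, hT2]
        exact Finset.mem_union_left _
          (Finset.mem_image.2 ⟨_, (G.mem_neighborFinset a _).2 (hnbr a f ha), rfl⟩)
      · have hb := hbmem f hadj ha
        have hval : φ (Sum.inr f) = (b, Sym2.Mem.other hb) := by
          simp only [hφ]; rw [dif_neg ha, dif_pos hb]
        rw [hval, hT2]
        exact Finset.mem_union_right _
          (Finset.mem_image.2 ⟨_, (G.mem_neighborFinset b _).2 (hnbr b f hb), rfl⟩)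
  · intro x hx y hy hxy
    simp only [Finset.coe_filter, Set.mem_setOf_eq] at hx hy
    have hxadj := hx.2
    have hyadj := hy.2
    rcases x with u | f <;> rcases y with u' | f'
    · rcases hinlval u hxadj with ⟨hu, hval⟩ | ⟨hu, hval⟩ <;>
        rcases hinlval u' hyadj with ⟨hu', hval'⟩ | ⟨hu', hval'⟩
      · rw [hu, hu']
      · rw [hval, hval'] at hxy
        exact absurd (congrArg Prod.fst hxy) hne
      · rw [hval, hval'] at hxy
        exact absurd (congrArg Prod.fst hxy).symm hne
      · rw [hu, hu']
    · exfalso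
      rcases hinlval u hxadj with ⟨-, hval⟩ | ⟨-, hval⟩
      · exact (hkey f' hyadj).1 (hxy.symm.trans hval)
      · exact (hkey f' hyadj).2 (hxy.symm.trans hval)
    · exfalso
      rcases hinlval u' hyadj with ⟨-, hval⟩ | ⟨-, hval⟩
      · exact (hkey f hxadj).1 (hxy.trans hval)
      · exact (hkey f hxadj).2 (hxy.trans hval)
    · exact congrArg Sum.inr (hkey2 f f' hxadj hyadj hxy)
lemma tSum_degenerate {V W : Type*} [Fintype V] [Fintype W]
    (k l : ℕ) (G : SimpleGraph V) (H : SimpleGraph W)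
    (hG : Degenerate k G) (hH : Degenerate l H) :
    Degenerate (max (2 * G.maxDegree) (k + l)) (tSum G H) := by
  intro s hs
  by_cases hcase : ∃ p ∈ s, ∃ e : ↥G.edgeSet, p.1 = Sum.inr e
  · obtain ⟨p, hp, e, hpe⟩ := hcase
    refine ⟨p, hp, le_trans ?_ (le_max_left _ _)⟩
    refine le_trans (Finset.card_le_card_of_injOn Prod.fst ?_ ?_) (tGraph_inr_degree_le G e)
    · intro q hq
      rw [Finset.mem_coe, Finset.mem_filter] at hq
      have h2 := tSum_adj_inr G H e p.2 q (by rw [← hpe]; exact hq.2)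
      rw [Finset.mem_coe, Finset.mem_filter]
      exact ⟨Finset.mem_univ _, h2.2⟩
    · intro q hq q' hq' hqq
      simp only [Finset.coe_filter, Set.mem_setOf_eq] at hq hq'
      have h2 := tSum_adj_inr G H e p.2 q (by rw [← hpe]; exact hq.2)
      have h2' := tSum_adj_inr G H e p.2 q' (by rw [← hpe]; exact hq'.2)
      exact Prod.ext hqq (h2.1.trans h2'.1.symm)
  · push_neg at hcase
    have hinl : ∀ p ∈ s, ∃ u : V, p.1 = Sum.inl u := by
      intro p hp
      rcases hx : p.1 with u | f
      · exact ⟨u, rfl⟩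
      · exact absurd hx (hcase p hp f)
    set T : Finset V := Finset.univ.filter
      (fun v : V => ∃ w : W, ((Sum.inl v : V ⊕ ↥G.edgeSet), w) ∈ s) with hT
    have hTne : T.Nonempty := by
      obtain ⟨p, hp⟩ := hs
      obtain ⟨u, hu⟩ := hinl p hp
      refine ⟨u, ?_⟩
      rw [hT, Finset.mem_filter]
      exact ⟨Finset.mem_univ _, p.2, by rw [← hu]; exact hp⟩
    obtain ⟨v, hvT, hvk⟩ := hG T hTne
    set Sv : Finset W := Finset.univ.filter
      (fun w : W => ((Sum.inl v : V ⊕ ↥G.edgeSet), w) ∈ s) with hSv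
    have hSvne : Sv.Nonempty := by
      rw [hT, Finset.mem_filter] at hvT
      obtain ⟨-, w, hw⟩ := hvT
      exact ⟨w, by rw [hSv, Finset.mem_filter]; exact ⟨Finset.mem_univ _, hw⟩⟩
    obtain ⟨w, hwS, hwl⟩ := hH Sv hSvne
    have hmem : ((Sum.inl v : V ⊕ ↥G.edgeSet), w) ∈ s := by
      rw [hSv, Finset.mem_filter] at hwS
      exact hwS.2
    refine ⟨(Sum.inl v, w), hmem, le_trans ?_ (le_max_right _ _)⟩
    set A : Finset ((V ⊕ ↥G.edgeSet) × W) :=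
      (Sv.filter fun w' => H.Adj w w').image fun w' => (Sum.inl v, w') with hA
    set B : Finset ((V ⊕ ↥G.edgeSet) × W) :=
      (T.filter fun v' => G.Adj v v').image fun v' => (Sum.inl v', w) with hB
    have hsub : (s.filter fun q => (tSum G H).Adj (Sum.inl v, w) q) ⊆ A ∪ B := by
      intro q hq
      rw [Finset.mem_filter] at hq
      obtain ⟨hqs, hqadj⟩ := hq
      rcases tSum_adj_inl G H v w q hqadj with ⟨h1, h2⟩ | ⟨h1, h2⟩
      · refine Finset.mem_union_left _ ?_
        rw [hA, Finset.mem_image]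
        refine ⟨q.2, ?_, by rw [← h1]⟩
        rw [Finset.mem_filter, hSv, Finset.mem_filter]
        refine ⟨⟨Finset.mem_univ _, ?_⟩, h2⟩
        rw [← h1]; exact hqs
      · obtain ⟨u, hu⟩ := hinl q hqs
        refine Finset.mem_union_right _ ?_
        rw [hB, Finset.mem_image]
        have hadj : G.Adj v u := by
          rw [hu] at h2
          exact (tGraph_adj_inl_inl G v u).1 h2
        refine ⟨u, ?_, by rw [← hu, ← h1]⟩
        rw [Finset.mem_filter, hT, Finset.mem_filter]
        refine ⟨⟨Finset.mem_univ _, q.2, ?_⟩, hadj⟩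
        rw [← hu]; exact hqs
    refine le_trans (Finset.card_le_card hsub) ?_
    refine le_trans (Finset.card_union_le _ _) ?_
    have hAcard : A.card ≤ l := le_trans (Finset.card_image_le) hwl
    have hBcard : B.card ≤ k := le_trans (Finset.card_image_le) hvk
    omega

/-- if `G` is `k`-degenerate with maximum degree `Δ(G)` and `H` is
`l`-degenerate, then `AT(G +_T H) ≤ max (2Δ(G)) (k + l) + 1`. -/
theorem stmt17 {V W : Type*} [Fintype V] [Fintype W]
    (k l : ℕ) (G : SimpleGraph V) (H : SimpleGraph W)
    (hG : Degenerate k G) (hH : Degenerate l H) :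
    alonTarsiNumber (tSum G H) ≤ max (2 * G.maxDegree) (k + l) + 1 :=
  AT_le_of_degenerate (tSum_degenerate k l G H hG hH)
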